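/- Morelli coincidence in dimension 2 via characteristic functions: if K = Cone(v₁,v₂) is a two-dimensional cone in ℝ² and K∨ = Cone(w₁,w₂) (identified with a cone in ℝ² via the standard inner product) with v₁ ⊥ w₁ and v₂ ⊥ w₂, and L₁ = Cone(v₁,w₁), L₂ = Cone(v₂,w₂), then the characteristic functions satisfy χ_K + χ_{K∨} = χ_{L₁} + χ_{L₂} pointwise (as functions on ℝ², away from a measure-zero set of boundaries, or as an identity of indicator functions of the four closed cones that holds away from the boundary rays). -/

import Mathlib

/-- The cone spanned by two vectors in `ℝ²`. -/
def cone2 (v w : ℝ × ℝ) : Set (ℝ × ℝ) := {x | ∃ a b : ℝ, 0 ≤ a ∧ 0 ≤ b ∧ x = a • v + b • w}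

/-- The ray spanned by a vector in `ℝ²`. -/
def ray2 (v : ℝ × ℝ) : Set (ℝ × ℝ) := {x | ∃ a : ℝ, 0 ≤ a ∧ x = a • v}

/-- The standard dot product on `ℝ²`. -/
def dot2 (x y : ℝ × ℝ) : ℝ := x.1 * y.1 + x.2 * y.2

def cross2 (x y : ℝ × ℝ) : ℝ := x.1 * y.2 - x.2 * y.1

lemma cramer2 (e f g x : ℝ × ℝ) :
    cross2 e f * dot2 g x = cross2 x f * dot2 g e + cross2 e x * dot2 g f := by
  simp only [cross2, dot2]; ring

lemma repr2 (e f x : ℝ × ℝ) (h : cross2 e f ≠ 0) :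
    x = (cross2 x f / cross2 e f) • e + (cross2 e x / cross2 e f) • f := by
  have h1 : x.1 = (cross2 x f / cross2 e f) * e.1 + (cross2 e x / cross2 e f) * f.1 := by
    rw [div_mul_eq_mul_div, div_mul_eq_mul_div, ← add_div, eq_div_iff h]
    simp only [cross2]; ring
  have h2 : x.2 = (cross2 x f / cross2 e f) * e.2 + (cross2 e x / cross2 e f) * f.2 := by
    rw [div_mul_eq_mul_div, div_mul_eq_mul_div, ← add_div, eq_div_iff h]
    simp only [cross2]; ring
  ext <;> simpa [Prod.smul_def]

lemma mem_cone2_iff (e f x : ℝ × ℝ) (h : cross2 e f ≠ 0) :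
    x ∈ cone2 e f ↔ 0 ≤ cross2 x f / cross2 e f ∧ 0 ≤ cross2 e x / cross2 e f := by
  constructor
  · rintro ⟨a, b, ha, hb, rfl⟩
    have e1 : cross2 (a • e + b • f) f = a * cross2 e f := by simp [cross2, Prod.smul_def]; ring
    have e2 : cross2 e (a • e + b • f) = b * cross2 e f := by simp [cross2, Prod.smul_def]; ring
    rw [e1, e2, mul_div_assoc, mul_div_assoc, div_self h, mul_one, mul_one]
    exact ⟨ha, hb⟩
  · rintro ⟨h1, h2⟩
    exact ⟨_, _, h1, h2, repr2 e f x h⟩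

lemma dot2_self_pos {v : ℝ × ℝ} (h : v ≠ 0) : 0 < dot2 v v := by
  rcases eq_or_lt_of_le (add_nonneg (mul_self_nonneg v.1) (mul_self_nonneg v.2)) with h0 | h0
  · exfalso
    apply h
    have h1 : v.1 = 0 := by nlinarith [mul_self_nonneg v.1, mul_self_nonneg v.2]
    have h2 : v.2 = 0 := by nlinarith [mul_self_nonneg v.1, mul_self_nonneg v.2]
    exact Prod.ext_iff.2 ⟨h1, h2⟩
  · simpa [dot2] using h0

lemma div_nonneg_iff_pos {a c : ℝ} (hc : 0 < c) : 0 ≤ a / c ↔ 0 ≤ a := by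
  rw [le_div_iff₀ hc, zero_mul]

lemma mul_nonneg_iff_pos {a c : ℝ} (hc : 0 < c) : 0 ≤ a * c ↔ 0 ≤ a := by
  constructor
  · intro h; by_contra hn; push_neg at hn; nlinarith
  · intro h; exact mul_nonneg h hc.le

lemma dot2_eq_zero_of_two {v₁ v₂ w : ℝ × ℝ} (hd : cross2 v₁ v₂ ≠ 0)
    (k1 : dot2 w v₁ = 0) (k2 : dot2 w v₂ = 0) : w = 0 := by
  simp only [dot2, cross2] at k1 k2 hd
  have h1 : w.1 * (v₁.1 * v₂.2 - v₁.2 * v₂.1) = 0 := by linear_combination v₂.2 * k1 - v₁.2 * k2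
  have h2 : w.2 * (v₁.1 * v₂.2 - v₁.2 * v₂.1) = 0 := by linear_combination v₁.1 * k2 - v₂.1 * k1
  have e1 : w.1 = 0 := by
    rcases mul_eq_zero.1 h1 with h | h
    · exact h
    · exact absurd h hd
  have e2 : w.2 = 0 := by
    rcases mul_eq_zero.1 h2 with h | h
    · exact h
    · exact absurd h hd
  exact Prod.ext_iff.2 ⟨e1, e2⟩

lemma cross2_ne_zero_of_perp {v w : ℝ × ℝ} (hv : v ≠ 0) (hw : w ≠ 0)
    (h : dot2 w v = 0) : cross2 v w ≠ 0 := by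
  intro hC
  have hW : 0 < dot2 w w := dot2_self_pos hw
  have h1 : v.1 * dot2 w w = w.1 * dot2 w v + w.2 * cross2 v w := by
    simp only [dot2, cross2]; ring
  have h2 : v.2 * dot2 w w = w.2 * dot2 w v - w.1 * cross2 v w := by
    simp only [dot2, cross2]; ring
  rw [h, hC] at h1 h2
  simp only [mul_zero, zero_add, add_zero, sub_zero] at h1 h2
  apply hv
  have e1 : v.1 = 0 := by
    rcases mul_eq_zero.1 h1 with h | h
    · exact h
    · exact absurd h hW.ne'
  have e2 : v.2 = 0 := by
    rcases mul_eq_zero.1 h2 with h | h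
    · exact h
    · exact absurd h hW.ne'
  exact Prod.ext_iff.2 ⟨e1, e2⟩

lemma perp_sign1 (v w x : ℝ × ℝ) (h : dot2 w v = 0) :
    dot2 v v * cross2 x w = cross2 v w * dot2 x v := by
  simp only [dot2, cross2] at h ⊢
  linear_combination (x.1 * v.2 - x.2 * v.1) * h

lemma morelli_key (A B M a b u r : ℝ) (hA : 0 < A) (hB : 0 < B) (hM : M ^ 2 < A * B)
    (hu : u = a * A + b * M) (hr : r = a * M + b * B)
    (e1 : ¬(b = 0 ∧ 0 ≤ a)) (e2 : ¬(a = 0 ∧ 0 ≤ b))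
    (e3 : ¬(u = 0 ∧ 0 ≤ b)) (e4 : ¬(r = 0 ∧ 0 ≤ a)) :
    ((if 0 ≤ a ∧ 0 ≤ b then (1 : ℝ) else 0) + (if 0 ≤ u ∧ 0 ≤ r then 1 else 0)) =
      (if 0 ≤ u ∧ 0 ≤ b then 1 else 0) + (if 0 ≤ r ∧ 0 ≤ a then 1 else 0) := by
  have k1 : B * u - M * r = a * (A * B - M ^ 2) := by rw [hu, hr]; ring
  have k2 : A * r - M * u = b * (A * B - M ^ 2) := by rw [hu, hr]; ring
  have hD : 0 < A * B - M ^ 2 := by linarith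
  rcases lt_trichotomy a 0 with ha | ha | ha
  · rcases lt_trichotomy b 0 with hb | hb | hb
    · -- a<0, b<0 : everything 0
      have hur : ¬(0 ≤ u ∧ 0 ≤ r) := by
        rintro ⟨h1, h2⟩
        have haD : a * (A * B - M ^ 2) < 0 := mul_neg_of_neg_of_pos ha hD
        have hbD : b * (A * B - M ^ 2) < 0 := mul_neg_of_neg_of_pos hb hD
        have hMr : 0 < M * r := by nlinarith [mul_nonneg hB.le h1]
        have hMu : 0 < M * u := by nlinarith [mul_nonneg hA.le h2]
        have hr0 : 0 < r := by
          rcases h2.eq_or_lt with h | h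
          · rw [← h] at hMr; simp at hMr
          · exact h
        have hu0 : 0 < u := by
          rcases h1.eq_or_lt with h | h
          · rw [← h] at hMu; simp at hMu
          · exact h
        have hM0 : 0 < M := by
          by_contra h
          push_neg at h
          nlinarith [mul_nonneg (neg_nonneg.2 h) hr0.le]
        have key : (B * u) * (A * r) < (M * r) * (M * u) :=
          mul_lt_mul'' (by linarith) (by linarith)
            (mul_nonneg hB.le hu0.le) (mul_nonneg hA.le hr0.le)
        nlinarith [key, mul_pos hD (mul_pos hu0 hr0)]
      rw [if_neg (fun h => absurd (not_lt_of_ge h.1) (not_not.2 ha)), if_neg hur,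
        if_neg (fun h => absurd (not_lt_of_ge h.2) (not_not.2 hb)),
        if_neg (fun h => absurd (not_lt_of_ge h.2) (not_not.2 ha))]
    · -- a<0, b=0
      subst hb
      have hu' : u < 0 := by nlinarith
      rw [if_neg (fun h => absurd (not_lt_of_ge h.1) (not_not.2 ha)),
        if_neg (fun h => absurd (not_lt_of_ge h.1) (not_not.2 hu')),
        if_neg (fun h => absurd (not_lt_of_ge h.1) (not_not.2 hu')),
        if_neg (fun h => absurd (not_lt_of_ge h.2) (not_not.2 ha))]
    · -- a<0, b>0
      have hune : u ≠ 0 := fun h => e3 ⟨h, hb.le⟩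
      rcases (lt_or_gt_of_ne hune) with hu' | hu'
      · rw [if_neg (fun h => absurd (not_lt_of_ge h.1) (not_not.2 ha)),
          if_neg (fun h => absurd (not_lt_of_ge h.1) (not_not.2 hu')),
          if_neg (fun h => absurd (not_lt_of_ge h.1) (not_not.2 hu')),
          if_neg (fun h => absurd (not_lt_of_ge h.2) (not_not.2 ha))]
      · have hr' : 0 < r := by
          have hbM : 0 < b * M := by nlinarith [mul_pos (neg_pos.2 ha) hA]
          have hM0 : 0 < M := by
            by_contra h
            push_neg at h
            nlinarith [mul_nonneg hb.le (neg_nonneg.2 h)]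
          have hMr : 0 < M * r := by
            nlinarith [mul_neg_of_neg_of_pos ha hD, mul_pos hB hu']
          by_contra h
          push_neg at h
          nlinarith [mul_nonneg hM0.le (neg_nonneg.2 h)]
        rw [if_neg (fun h => absurd (not_lt_of_ge h.1) (not_not.2 ha)),
          if_pos ⟨hu'.le, hr'.le⟩, if_pos ⟨hu'.le, hb.le⟩,
          if_neg (fun h => absurd (not_lt_of_ge h.2) (not_not.2 ha))]
        norm_num
  · -- a = 0
    subst ha
    have hb : b < 0 := by
      rcases lt_trichotomy b 0 with h | h | h
      · exact h
      · exact absurd ⟨h, le_refl 0⟩ e1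
      · exact absurd ⟨rfl, h.le⟩ e2
    have hr' : r < 0 := by nlinarith
    rw [if_neg (fun h => absurd (not_lt_of_ge h.2) (not_not.2 hb)),
      if_neg (fun h => absurd (not_lt_of_ge h.2) (not_not.2 hr')),
      if_neg (fun h => absurd (not_lt_of_ge h.2) (not_not.2 hb)),
      if_neg (fun h => absurd (not_lt_of_ge h.1) (not_not.2 hr'))]
  · rcases lt_trichotomy b 0 with hb | hb | hb
    · -- a>0, b<0
      have hrne : r ≠ 0 := fun h => e4 ⟨h, ha.le⟩
      rcases (lt_or_gt_of_ne hrne) with hr' | hr'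
      · rw [if_neg (fun h => absurd (not_lt_of_ge h.2) (not_not.2 hb)),
          if_neg (fun h => absurd (not_lt_of_ge h.2) (not_not.2 hr')),
          if_neg (fun h => absurd (not_lt_of_ge h.2) (not_not.2 hb)),
          if_neg (fun h => absurd (not_lt_of_ge h.1) (not_not.2 hr'))]
      · have hu' : 0 < u := by
          have haM : 0 < a * M := by nlinarith [mul_pos (neg_pos.2 hb) hB]
          have hM0 : 0 < M := by
            by_contra h
            push_neg at h
            nlinarith [mul_nonneg ha.le (neg_nonneg.2 h)]
          have hMu : 0 < M * u := by
            nlinarith [mul_neg_of_neg_of_pos hb hD, mul_pos hA hr']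
          by_contra h
          push_neg at h
          nlinarith [mul_nonneg hM0.le (neg_nonneg.2 h)]
        rw [if_neg (fun h => absurd (not_lt_of_ge h.2) (not_not.2 hb)),
          if_pos ⟨hu'.le, hr'.le⟩,
          if_neg (fun h => absurd (not_lt_of_ge h.2) (not_not.2 hb)),
          if_pos ⟨hr'.le, ha.le⟩]
    · exact absurd ⟨hb, ha.le⟩ e1
    · -- a>0, b>0
      have hune : u ≠ 0 := fun h => e3 ⟨h, hb.le⟩
      have hrne : r ≠ 0 := fun h => e4 ⟨h, ha.le⟩
      rcases (lt_or_gt_of_ne hune) with hu' | hu'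
      · have hr' : 0 < r := by
          rcases (lt_or_gt_of_ne hrne) with h | h
          · exfalso
            have haD : 0 < a * (A * B - M ^ 2) := mul_pos ha hD
            have hbD : 0 < b * (A * B - M ^ 2) := mul_pos hb hD
            have hMr : M * r < 0 := by nlinarith [mul_neg_of_pos_of_neg hB hu']
            have hMu : M * u < 0 := by nlinarith [mul_neg_of_pos_of_neg hA h]
            have hM0 : 0 < M := by
              by_contra hc
              push_neg at hc
              nlinarith [mul_nonneg (neg_nonneg.2 hc) (neg_nonneg.2 h.le)]
            have key : (-(B * u)) * (-(A * r)) < (-(M * r)) * (-(M * u)) :=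
              mul_lt_mul'' (by linarith) (by linarith)
                (by nlinarith [mul_neg_of_pos_of_neg hB hu'])
                (by nlinarith [mul_neg_of_pos_of_neg hA h])
            nlinarith [key, mul_pos hD (mul_pos_of_neg_of_neg hu' h)]
          · exact h
        rw [if_pos ⟨ha.le, hb.le⟩,
          if_neg (fun h => absurd (not_lt_of_ge h.1) (not_not.2 hu')),
          if_neg (fun h => absurd (not_lt_of_ge h.1) (not_not.2 hu')),
          if_pos ⟨hr'.le, ha.le⟩]
        norm_num
      · rcases (lt_or_gt_of_ne hrne) with hr' | hr'
        · rw [if_pos ⟨ha.le, hb.le⟩,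
            if_neg (fun h => absurd (not_lt_of_ge h.2) (not_not.2 hr')),
            if_pos ⟨hu'.le, hb.le⟩,
            if_neg (fun h => absurd (not_lt_of_ge h.1) (not_not.2 hr'))]
        · rw [if_pos ⟨ha.le, hb.le⟩, if_pos ⟨hu'.le, hr'.le⟩,
            if_pos ⟨hu'.le, hb.le⟩, if_pos ⟨hr'.le, ha.le⟩]

/-- Morelli's coincidence in dimension 2, via characteristic functions:
`χ_K + χ_{K∨} = χ_{L₁} + χ_{L₂}` away from the four boundary rays. -/
theorem morelli_char_fun_identity (v₁ v₂ w₁ w₂ : ℝ × ℝ)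
    (hind : LinearIndependent ℝ ![v₁, v₂])
    (hdual : cone2 w₁ w₂ = {w | ∀ v ∈ cone2 v₁ v₂, 0 ≤ dot2 w v})
    (h₁ : dot2 w₁ v₁ = 0) (h₂ : dot2 w₂ v₂ = 0) :
    ∀ x ∉ ray2 v₁ ∪ ray2 v₂ ∪ ray2 w₁ ∪ ray2 w₂,
      (cone2 v₁ v₂).indicator (1 : (ℝ × ℝ) → ℝ) x +
        (cone2 w₁ w₂).indicator 1 x =
      (cone2 v₁ w₁).indicator 1 x + (cone2 v₂ w₂).indicator 1 x := by
  classical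
  -- the determinant is nonzero
  have hd : cross2 v₁ v₂ ≠ 0 := by
    intro hC
    rw [linearIndependent_fin2] at hind
    obtain ⟨hv₂, hni⟩ := hind
    simp only [Matrix.cons_val_one, Matrix.head_cons, Matrix.cons_val_zero] at hv₂ hni
    have hW : 0 < dot2 v₂ v₂ := dot2_self_pos hv₂
    apply hni (dot2 v₁ v₂ / dot2 v₂ v₂)
    simp only [cross2] at hC
    have e1 : v₁.1 = (dot2 v₁ v₂ / dot2 v₂ v₂) * v₂.1 := by
      rw [div_mul_eq_mul_div, eq_div_iff hW.ne']
      simp only [dot2]; linear_combination v₂.2 * hC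
    have e2 : v₁.2 = (dot2 v₁ v₂ / dot2 v₂ v₂) * v₂.2 := by
      rw [div_mul_eq_mul_div, eq_div_iff hW.ne']
      simp only [dot2]; linear_combination (-v₂.1) * hC
    refine Prod.ext_iff.2 ⟨?_, ?_⟩ <;> simp only [Prod.smul_fst, Prod.smul_snd, smul_eq_mul]
    · exact e1.symm
    · exact e2.symm
  have hv₁ : v₁ ≠ 0 := by rintro rfl; simp [cross2] at hd
  have hv₂ : v₂ ≠ 0 := by rintro rfl; simp [cross2] at hd
  have hA : 0 < dot2 v₁ v₁ := dot2_self_pos hv₁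
  have hB : 0 < dot2 v₂ v₂ := dot2_self_pos hv₂
  -- basic cone memberships
  have hv₁K : v₁ ∈ cone2 v₁ v₂ := ⟨1, 0, zero_le_one, le_refl 0, by simp⟩
  have hv₂K : v₂ ∈ cone2 v₁ v₂ := ⟨0, 1, le_refl 0, zero_le_one, by simp⟩
  -- characterization of the dual cone
  have hKd : ∀ y : ℝ × ℝ, (y ∈ cone2 w₁ w₂ ↔ 0 ≤ dot2 y v₁ ∧ 0 ≤ dot2 y v₂) := by
    intro y
    rw [hdual]
    simp only [Set.mem_setOf_eq]
    constructor
    · intro h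
      exact ⟨h v₁ hv₁K, h v₂ hv₂K⟩
    · rintro ⟨hy1, hy2⟩ v ⟨α, β, hα, hβ, rfl⟩
      have hexp : dot2 y (α • v₁ + β • v₂) = α * dot2 y v₁ + β * dot2 y v₂ := by
        simp [dot2, Prod.smul_def]; ring
      rw [hexp]
      exact add_nonneg (mul_nonneg hα hy1) (mul_nonneg hβ hy2)
  -- positivity of the off-diagonal pairings
  have hc₁ : 0 < dot2 w₁ v₂ := by
    have hmem : w₁ ∈ cone2 w₁ w₂ := ⟨1, 0, zero_le_one, le_refl 0, by simp⟩
    have h0 : 0 ≤ dot2 w₁ v₂ := ((hKd w₁).1 hmem).2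
    rcases h0.eq_or_lt with hc | hc
    · exfalso
      have hw₁0 : w₁ = 0 := dot2_eq_zero_of_two hd h₁ hc.symm
      -- the vector q with dot2 q v₁ = 0, dot2 q v₂ = 1
      set q : ℝ × ℝ := (-v₁.2 / cross2 v₁ v₂, v₁.1 / cross2 v₁ v₂) with hq_def
      have hq1 : dot2 q v₁ = 0 := by
        simp only [dot2, hq_def]
        field_simp
        ring
      have hq2 : dot2 q v₂ = 1 := by
        simp only [dot2, hq_def]
        rw [div_mul_eq_mul_div, div_mul_eq_mul_div, ← add_div, div_eq_one_iff_eq hd]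
        simp only [cross2]; ring
      have hqK : q ∈ cone2 w₁ w₂ := (hKd q).2 ⟨le_of_eq hq1.symm, by rw [hq2]; norm_num⟩
      obtain ⟨α, β, hα, hβ, hq⟩ := hqK
      rw [hw₁0, smul_zero, zero_add] at hq
      have : dot2 q v₂ = β * dot2 w₂ v₂ := by rw [hq]; simp [dot2, Prod.smul_def]; ring
      rw [hq2, h₂, mul_zero] at this
      exact one_ne_zero this
    · exact hc
  have hc₂ : 0 < dot2 w₂ v₁ := by
    have hmem : w₂ ∈ cone2 w₁ w₂ := ⟨0, 1, le_refl 0, zero_le_one, by simp⟩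
    have h0 : 0 ≤ dot2 w₂ v₁ := ((hKd w₂).1 hmem).1
    rcases h0.eq_or_lt with hc | hc
    · exfalso
      have hw₂0 : w₂ = 0 := dot2_eq_zero_of_two hd hc.symm h₂
      set p : ℝ × ℝ := (v₂.2 / cross2 v₁ v₂, -v₂.1 / cross2 v₁ v₂) with hp_def
      have hp1 : dot2 p v₁ = 1 := by
        simp only [dot2, hp_def]
        rw [div_mul_eq_mul_div, div_mul_eq_mul_div, ← add_div, div_eq_one_iff_eq hd]
        simp only [cross2]; ring
      have hp2 : dot2 p v₂ = 0 := by
        simp only [dot2, hp_def]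
        field_simp
        ring
      have hpK : p ∈ cone2 w₁ w₂ := (hKd p).2 ⟨by rw [hp1]; norm_num, le_of_eq hp2.symm⟩
      obtain ⟨α, β, hα, hβ, hp⟩ := hpK
      rw [hw₂0, smul_zero, add_zero] at hp
      have : dot2 p v₁ = α * dot2 w₁ v₁ := by rw [hp]; simp [dot2, Prod.smul_def]; ring
      rw [hp1, h₁, mul_zero] at this
      exact one_ne_zero this
    · exact hc
  have hw₁ : w₁ ≠ 0 := by rintro rfl; simp [dot2] at hc₁
  have hw₂ : w₂ ≠ 0 := by rintro rfl; simp [dot2] at hc₂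
  have hW₁ : 0 < dot2 w₁ w₁ := dot2_self_pos hw₁
  have hW₂ : 0 < dot2 w₂ w₂ := dot2_self_pos hw₂
  have hd₁ : cross2 v₁ w₁ ≠ 0 := cross2_ne_zero_of_perp hv₁ hw₁ h₁
  have hd₂ : cross2 v₂ w₂ ≠ 0 := cross2_ne_zero_of_perp hv₂ hw₂ h₂
  -- Lagrange identity gives the strict Cauchy–Schwarz inequality
  have hM2 : dot2 v₁ v₂ ^ 2 < dot2 v₁ v₁ * dot2 v₂ v₂ := by
    have hlag : dot2 v₁ v₁ * dot2 v₂ v₂ - dot2 v₁ v₂ ^ 2 = cross2 v₁ v₂ ^ 2 := by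
      simp only [dot2, cross2]; ring
    have hpos : 0 < cross2 v₁ v₂ ^ 2 :=
      lt_of_le_of_ne (sq_nonneg _) (Ne.symm (pow_ne_zero 2 hd))
    linarith
  intro x hx
  simp only [Set.mem_union, not_or] at hx
  obtain ⟨⟨⟨hxv₁, hxv₂⟩, hxw₁⟩, hxw₂⟩ := hx
  -- coordinates of x in the basis (v₁, v₂)
  set aa : ℝ := cross2 x v₂ / cross2 v₁ v₂ with haa_def
  set bb : ℝ := cross2 v₁ x / cross2 v₁ v₂ with hbb_def
  have hx' : x = aa • v₁ + bb • v₂ := repr2 v₁ v₂ x hd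
  -- expression of the dot products in coordinates
  have hu : dot2 x v₁ = aa * dot2 v₁ v₁ + bb * dot2 v₁ v₂ := by
    conv_lhs => rw [hx']
    simp [dot2, Prod.smul_def]; ring
  have hr : dot2 x v₂ = aa * dot2 v₁ v₂ + bb * dot2 v₂ v₂ := by
    conv_lhs => rw [hx']
    simp [dot2, Prod.smul_def]; ring
  -- dot2 w₁ x = bb * c₁ and dot2 w₂ x = aa * c₂
  have hw₁x : dot2 w₁ x = bb * dot2 w₁ v₂ := by
    rw [hbb_def, div_mul_eq_mul_div, eq_div_iff hd]
    have := cramer2 v₁ v₂ w₁ x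
    rw [h₁, mul_zero, zero_add] at this
    linarith
  have hw₂x : dot2 w₂ x = aa * dot2 w₂ v₁ := by
    rw [haa_def, div_mul_eq_mul_div, eq_div_iff hd]
    have := cramer2 v₁ v₂ w₂ x
    rw [h₂, mul_zero, add_zero] at this
    linarith
  -- quotient identities for the orthogonal cones
  have q1 : cross2 x w₁ / cross2 v₁ w₁ = dot2 x v₁ / dot2 v₁ v₁ := by
    rw [div_eq_div_iff hd₁ hA.ne']
    linarith [perp_sign1 v₁ w₁ x h₁]
  have q2 : cross2 v₁ x / cross2 v₁ w₁ = dot2 w₁ x / dot2 w₁ w₁ := by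
    rw [div_eq_div_iff hd₁ hW₁.ne']
    have := cramer2 v₁ w₁ w₁ x
    rw [h₁, mul_zero, zero_add] at this
    linarith
  have q3 : cross2 x w₂ / cross2 v₂ w₂ = dot2 x v₂ / dot2 v₂ v₂ := by
    rw [div_eq_div_iff hd₂ hB.ne']
    linarith [perp_sign1 v₂ w₂ x h₂]
  have q4 : cross2 v₂ x / cross2 v₂ w₂ = dot2 w₂ x / dot2 w₂ w₂ := by
    rw [div_eq_div_iff hd₂ hW₂.ne']
    have := cramer2 v₂ w₂ w₂ x
    rw [h₂, mul_zero, zero_add] at this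
    linarith
  -- membership characterizations
  have hK : x ∈ cone2 v₁ v₂ ↔ 0 ≤ aa ∧ 0 ≤ bb := mem_cone2_iff v₁ v₂ x hd
  have hKdx : x ∈ cone2 w₁ w₂ ↔ 0 ≤ dot2 x v₁ ∧ 0 ≤ dot2 x v₂ := hKd x
  have hL₁ : x ∈ cone2 v₁ w₁ ↔ 0 ≤ dot2 x v₁ ∧ 0 ≤ bb := by
    rw [mem_cone2_iff v₁ w₁ x hd₁, q1, q2, hw₁x,
      div_nonneg_iff_pos hA, div_nonneg_iff_pos hW₁, mul_nonneg_iff_pos hc₁]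
  have hL₂ : x ∈ cone2 v₂ w₂ ↔ 0 ≤ dot2 x v₂ ∧ 0 ≤ aa := by
    rw [mem_cone2_iff v₂ w₂ x hd₂, q3, q4, hw₂x,
      div_nonneg_iff_pos hB, div_nonneg_iff_pos hW₂, mul_nonneg_iff_pos hc₂]
  -- ray exclusions
  have e1 : ¬(bb = 0 ∧ 0 ≤ aa) := by
    rintro ⟨hb0, ha0⟩
    exact hxv₁ ⟨aa, ha0, by rw [hx', hb0, zero_smul, add_zero]⟩
  have e2 : ¬(aa = 0 ∧ 0 ≤ bb) := by
    rintro ⟨ha0, hb0⟩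
    exact hxv₂ ⟨bb, hb0, by rw [hx', ha0, zero_smul, zero_add]⟩
  have e3 : ¬(dot2 x v₁ = 0 ∧ 0 ≤ bb) := by
    rintro ⟨hu0, hb0⟩
    apply hxw₁
    refine ⟨cross2 v₁ x / cross2 v₁ w₁, ?_, ?_⟩
    · rw [q2, hw₁x]
      exact div_nonneg (mul_nonneg hb0 hc₁.le) hW₁.le
    · have := repr2 v₁ w₁ x hd₁
      rwa [q1, hu0, zero_div, zero_smul, zero_add] at this
  have e4 : ¬(dot2 x v₂ = 0 ∧ 0 ≤ aa) := by
    rintro ⟨hr0, ha0⟩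
    apply hxw₂
    refine ⟨cross2 v₂ x / cross2 v₂ w₂, ?_, ?_⟩
    · rw [q4, hw₂x]
      exact div_nonneg (mul_nonneg ha0 hc₂.le) hW₂.le
    · have := repr2 v₂ w₂ x hd₂
      rwa [q3, hr0, zero_div, zero_smul, zero_add] at this
  -- conclude via the scalar key lemma
  rw [Set.indicator_apply, Set.indicator_apply, Set.indicator_apply, Set.indicator_apply]
  simp only [Pi.one_apply]
  rw [show (if x ∈ cone2 v₁ v₂ then (1:ℝ) else 0) = if 0 ≤ aa ∧ 0 ≤ bb then 1 else 0 from
      if_congr hK rfl rfl,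
    show (if x ∈ cone2 w₁ w₂ then (1:ℝ) else 0) =
        if 0 ≤ dot2 x v₁ ∧ 0 ≤ dot2 x v₂ then 1 else 0 from if_congr hKdx rfl rfl,
    show (if x ∈ cone2 v₁ w₁ then (1:ℝ) else 0) =
        if 0 ≤ dot2 x v₁ ∧ 0 ≤ bb then 1 else 0 from if_congr hL₁ rfl rfl,
    show (if x ∈ cone2 v₂ w₂ then (1:ℝ) else 0) =
        if 0 ≤ dot2 x v₂ ∧ 0 ≤ aa then 1 else 0 from if_congr hL₂ rfl rfl]
  exact morelli_key (dot2 v₁ v₁) (dot2 v₂ v₂) (dot2 v₁ v₂) aa bb (dot2 x v₁) (dot2 x v₂)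
    hA hB hM2 hu hr e1 e2 e3 e4
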